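/- Let Y be a rational vector space, f : ℝ → Y, s ≥ 1, and δ > 0. If Δ_h^s f(x) = 0 for all x ∈ ℝ and all h ∈ (-δ, 0), then Δ_{h_1} ⋯ Δ_{h_s} f(x) = 0 for all x, h_1, ..., h_s ∈ ℝ. -/

import Mathlib

/-- The difference operator `Δ_h f (x) = f (x + h) - f x`. -/
def dd {X Y : Type*} [Add X] [Sub Y] (h : X) (f : X → Y) : X → Y :=
  fun x => f (x + h) - f x

/-- Iterated difference `Δ_{h₁}(Δ_{h₂ ⋯ hₛ} f)` for a list of steps. -/
def ddIter {X Y : Type*} [Add X] [Sub Y] (hs : List X) (f : X → Y) : X → Y :=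
  hs.foldr dd f

set_option linter.unusedSectionVars false

namespace Stmt6Aux

variable {Y : Type*} [AddCommGroup Y] [Module ℚ Y]

/-- Translation operator. -/
def tr (c : ℝ) (F : ℝ → Y) : ℝ → Y := fun x => F (x + c)

theorem dd_zero_fun (h : ℝ) : dd h (0 : ℝ → Y) = 0 := by
  funext x; simp [dd]

theorem dd_add_fun (h : ℝ) (F G : ℝ → Y) : dd h (F + G) = dd h F + dd h G := by
  funext x; simp [dd]; abel

theorem dd_neg_fun (h : ℝ) (F : ℝ → Y) : dd h (-F) = -dd h F := by
  funext x; simp [dd]; abel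

theorem dd_smul_fun (h : ℝ) (c : ℚ) (F : ℝ → Y) : dd h (c • F) = c • dd h F := by
  funext x; simp [dd, smul_sub]

theorem dd_comm (a b : ℝ) (F : ℝ → Y) : dd a (dd b F) = dd b (dd a F) := by
  funext x; simp only [dd]
  have e : x + b + a = x + a + b := by ring
  rw [e]; abel

theorem dd_tr (a c : ℝ) (F : ℝ → Y) : dd a (tr c F) = tr c (dd a F) := by
  funext x; simp only [dd, tr]
  have e : x + a + c = x + c + a := by ring
  rw [e]

theorem tr_zero_fun (c : ℝ) : tr c (0 : ℝ → Y) = 0 := rfl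

theorem tr_zero (F : ℝ → Y) : tr 0 F = F := by funext x; simp [tr]

theorem tr_tr (c d : ℝ) (F : ℝ → Y) : tr c (tr d F) = tr (d + c) F := by
  funext x; simp only [tr]
  have e : x + c + d = x + (d + c) := by ring
  rw [e]

theorem tr_add_fun (c : ℝ) (F G : ℝ → Y) : tr c (F + G) = tr c F + tr c G := rfl

theorem tr_neg_fun (c : ℝ) (F : ℝ → Y) : tr c (-F) = -tr c F := rfl

theorem tr_smul_fun (c : ℝ) (q : ℚ) (F : ℝ → Y) : tr c (q • F) = q • tr c F := rfl

theorem dd_zero_step (F : ℝ → Y) : dd (0 : ℝ) F = 0 := by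
  funext x; simp [dd]

/-- Exact three-term splitting of a difference with a sum step. -/
theorem dd_add_split (a b : ℝ) (F : ℝ → Y) :
    dd (a + b) F = dd a F + dd b F + dd b (dd a F) := by
  funext x; simp only [dd, Pi.add_apply]
  have e : x + (a + b) = x + b + a := by ring
  rw [e]; abel

/-- Two-term splitting with a translation. -/
theorem dd_add_step (a b : ℝ) (F : ℝ → Y) :
    dd (a + b) F = tr b (dd a F) + dd b F := by
  funext x; simp only [dd, tr, Pi.add_apply]
  have e : x + (a + b) = x + b + a := by ring
  rw [e]; abel

theorem dd_neg_step (a : ℝ) (F : ℝ → Y) :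
    dd (-a) F = -tr (-a) (dd a F) := by
  funext x; simp only [dd, tr, Pi.neg_apply]
  have e : x + -a + a = x := by ring
  rw [e]; abel

theorem dd_iter_zero (h : ℝ) (m : ℕ) : (dd h)^[m] (0 : ℝ → Y) = 0 := by
  induction m with
  | zero => rfl
  | succ m ih => rw [Function.iterate_succ_apply, dd_zero_fun, ih]

theorem dd_iter_add_fun (h : ℝ) (m : ℕ) (F G : ℝ → Y) :
    (dd h)^[m] (F + G) = (dd h)^[m] F + (dd h)^[m] G := by
  induction m generalizing F G with
  | zero => rfl
  | succ m ih => rw [Function.iterate_succ_apply, dd_add_fun, ih,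
      Function.iterate_succ_apply, Function.iterate_succ_apply]

theorem dd_iter_neg_fun (h : ℝ) (m : ℕ) (F : ℝ → Y) :
    (dd h)^[m] (-F) = -(dd h)^[m] F := by
  induction m generalizing F with
  | zero => rfl
  | succ m ih => rw [Function.iterate_succ_apply, dd_neg_fun, ih,
      Function.iterate_succ_apply]

theorem dd_iter_tr (h c : ℝ) (m : ℕ) (F : ℝ → Y) :
    (dd h)^[m] (tr c F) = tr c ((dd h)^[m] F) := by
  induction m generalizing F with
  | zero => rfl
  | succ m ih => rw [Function.iterate_succ_apply, dd_tr, ih,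
      Function.iterate_succ_apply]

/-- Doubling the step preserves vanishing of the `m`-th iterated difference. -/
theorem vanish_double (u : ℝ) (m : ℕ) :
    ∀ F : ℝ → Y, (dd u)^[m] F = 0 → (dd (u + u))^[m] F = 0 := by
  induction m with
  | zero => intro F hF; exact hF
  | succ m ih =>
    intro F hF
    rw [Function.iterate_succ_apply, dd_add_split]
    apply ih
    have h1 : (dd u)^[m] (dd u F) = 0 := by
      rw [← Function.iterate_succ_apply]; exact hF
    rw [dd_iter_add_fun, dd_iter_add_fun, h1]
    have h2 : (dd u)^[m] (dd u (dd u F)) = 0 := by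
      rw [← Function.iterate_succ_apply, Function.iterate_succ_apply', h1, dd_zero_fun]
    rw [h2]
    simp

/-- Negating the step preserves vanishing of the `m`-th iterated difference. -/
theorem vanish_neg (u : ℝ) (m : ℕ) :
    ∀ F : ℝ → Y, (dd u)^[m] F = 0 → (dd (-u))^[m] F = 0 := by
  induction m with
  | zero => intro F hF; exact hF
  | succ m ih =>
    intro F hF
    rw [Function.iterate_succ_apply, dd_neg_step]
    apply ih
    rw [dd_iter_neg_fun, dd_iter_tr, ← Function.iterate_succ_apply, hF]
    simp [tr_zero_fun]

instance : LeftCommutative (dd : ℝ → (ℝ → Y) → (ℝ → Y)) := ⟨fun a b F => dd_comm a b F⟩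

theorem ddIter_nil (F : ℝ → Y) : ddIter ([] : List ℝ) F = F := rfl

theorem ddIter_cons (a : ℝ) (l : List ℝ) (F : ℝ → Y) :
    ddIter (a :: l) F = dd a (ddIter l F) := rfl

theorem ddIter_zero_fun (l : List ℝ) : ddIter l (0 : ℝ → Y) = 0 := by
  induction l with
  | nil => rfl
  | cons a l ih => rw [ddIter_cons, ih, dd_zero_fun]

theorem ddIter_add_fun (l : List ℝ) (F G : ℝ → Y) :
    ddIter l (F + G) = ddIter l F + ddIter l G := by
  induction l with
  | nil => rfl
  | cons a l ih => rw [ddIter_cons, ih, dd_add_fun]; rfl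

theorem ddIter_smul_fun (l : List ℝ) (c : ℚ) (F : ℝ → Y) :
    ddIter l (c • F) = c • ddIter l F := by
  induction l with
  | nil => rfl
  | cons a l ih => rw [ddIter_cons, ih, dd_smul_fun]; rfl

theorem ddIter_tr (l : List ℝ) (c : ℝ) (F : ℝ → Y) :
    ddIter l (tr c F) = tr c (ddIter l F) := by
  induction l with
  | nil => rfl
  | cons a l ih => rw [ddIter_cons, ih, dd_tr]; rfl

theorem ddIter_perm {l₁ l₂ : List ℝ} (p : List.Perm l₁ l₂) (F : ℝ → Y) :
    ddIter l₁ F = ddIter l₂ F :=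
  p.foldr_eq F

theorem ddIter_append (l₁ l₂ : List ℝ) (F : ℝ → Y) :
    ddIter (l₁ ++ l₂) F = ddIter l₁ (ddIter l₂ F) := by
  simp [ddIter, List.foldr_append]

theorem ddIter_replicate (m : ℕ) (t : ℝ) (F : ℝ → Y) :
    ddIter (List.replicate m t) F = (dd t)^[m] F := by
  induction m with
  | zero => rfl
  | succ m ih =>
    rw [List.replicate_succ, ddIter_cons, ih]
    exact (Function.iterate_succ_apply' (dd t) m F).symm

/-- Exact identity for additivity of `ddIter` in one position, with an explicit
order-(n+1) correction term. -/
theorem ddIter_set_add (F : ℝ → Y) :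
    ∀ (l : List ℝ) (i : ℕ), i < l.length → ∀ (a b : ℝ),
    ddIter (l.set i (a + b)) F =
      ddIter (l.set i a) F + ddIter (l.set i b) F + ddIter (b :: a :: l.eraseIdx i) F := by
  intro l
  induction l with
  | nil => intro i hi; simp at hi
  | cons c t ih =>
    intro i hi a b
    cases i with
    | zero =>
      simp only [List.set, List.eraseIdx, ddIter_cons]
      rw [dd_add_split]
    | succ i =>
      have hi' : i < t.length := by simpa using hi
      simp only [List.set, List.eraseIdx, ddIter_cons]
      rw [ih i hi' a b, dd_add_fun, dd_add_fun]
      congr 1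
      have hperm : List.Perm (c :: b :: a :: t.eraseIdx i) (b :: a :: c :: t.eraseIdx i) := by
        refine List.Perm.trans (List.Perm.swap b c _) ?_
        exact List.Perm.cons b (List.Perm.swap a c _)
      rw [← ddIter_cons, ← ddIter_cons, ← ddIter_cons, ← ddIter_cons,
        ddIter_perm hperm]

theorem ddIter_set_zero (F : ℝ → Y) :
    ∀ (l : List ℝ) (i : ℕ), i < l.length →
    ddIter (l.set i (0 : ℝ)) F = 0 := by
  intro l
  induction l with
  | nil => intro i hi; simp at hi
  | cons c t ih =>
    intro i hi
    cases i with
    | zero =>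
      simp only [List.set, ddIter_cons]
      rw [dd_zero_step]
    | succ i =>
      have hi' : i < t.length := by simpa using hi
      simp only [List.set, ddIter_cons]
      rw [ih i hi', dd_zero_fun]

section Extend

variable (f : ℝ → Y) (s : ℕ)

/-- Scaling the step by powers of two. -/
theorem vanish_pow2 (u : ℝ) (hu : (dd u)^[s] f = 0) :
    ∀ j : ℕ, (dd (u * 2 ^ j))^[s] f = 0 := by
  intro j
  induction j with
  | zero => simpa using hu
  | succ j ih =>
    have e : u * 2 ^ (j + 1) = u * 2 ^ j + u * 2 ^ j := by ring
    rw [e]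
    exact vanish_double _ _ _ ih

theorem hall_of_small (hs : 1 ≤ s) (δ : ℝ) (hδ : 0 < δ)
    (H : ∀ h ∈ Set.Ioo (-δ) (0 : ℝ), (dd h)^[s] f = 0) :
    ∀ h : ℝ, (dd h)^[s] f = 0 := by
  have Hneg : ∀ h : ℝ, h < 0 → (dd h)^[s] f = 0 := by
    intro h hh
    obtain ⟨k, hk⟩ := exists_nat_gt ((-h) / δ)
    have h2k : ((-h) / δ) < (2 : ℝ) ^ k := by
      refine hk.trans_le ?_
      exact_mod_cast (Nat.lt_two_pow_self (n := k)).le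
    have hpow : (0 : ℝ) < 2 ^ k := by positivity
    have hu : h / 2 ^ k ∈ Set.Ioo (-δ) (0 : ℝ) := by
      constructor
      · have h3 : -h < 2 ^ k * δ := (div_lt_iff₀ hδ).mp h2k
        rw [lt_div_iff₀ hpow]
        nlinarith
      · exact div_neg_of_neg_of_pos hh hpow
    have := vanish_pow2 f s (h / 2 ^ k) (H _ hu) k
    have e : h / 2 ^ k * 2 ^ k = h := by field_simp
    rwa [e] at this
  intro h
  rcases lt_trichotomy h 0 with hlt | heq | hgt
  · exact Hneg h hlt
  · subst heq
    obtain ⟨m, rfl⟩ := Nat.exists_eq_add_of_le hs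
    rw [Function.iterate_add_apply, Function.iterate_one, dd_zero_step]
  · have := Hneg (-h) (by linarith)
    have := vanish_neg (-h) s f this
    rwa [neg_neg] at this

theorem hn_of_hall (Hall : ∀ h : ℝ, (dd h)^[s] f = 0) :
    ∀ n, s ≤ n → ∀ h : ℝ, (dd h)^[n] f = 0 := by
  intro n hn h
  obtain ⟨m, rfl⟩ := Nat.exists_eq_add_of_le hn
  rw [add_comm, Function.iterate_add_apply, Hall h, dd_iter_zero]

end Extend

section OfFn

theorem ofFn_update {n : ℕ} (v : Fin n → ℝ) (i : Fin n) (x : ℝ) :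
    List.ofFn (Function.update v i x) = (List.ofFn v).set i x := by
  apply List.ext_getElem
  · simp
  · intro j h1 h2
    have hj : j < n := by simpa using h1
    rw [List.getElem_ofFn, List.getElem_set]
    by_cases hij : (i : ℕ) = j
    · have : i = ⟨j, hj⟩ := Fin.ext hij
      subst this
      simp [Function.update]
    · rw [if_neg hij, List.getElem_ofFn]
      have : (⟨j, by simpa using h1⟩ : Fin n) ≠ i := by
        intro hc; apply hij; rw [← hc]
      simp [Function.update_of_ne this]

theorem ofFn_comp_perm {n : ℕ} (σ : Equiv.Perm (Fin n)) (v : Fin n → ℝ) :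
    List.Perm (List.ofFn (v ∘ σ)) (List.ofFn v) := by
  rw [List.ofFn_eq_map, List.ofFn_eq_map]
  have h : List.Perm ((List.finRange n).map σ) (List.finRange n) := by
    apply List.perm_of_nodup_nodup_toFinset_eq
    · exact (List.nodup_finRange n).map σ.injective
    · exact List.nodup_finRange n
    · ext a
      simp only [List.mem_toFinset, List.mem_map, List.mem_finRange, true_and, iff_true]
      exact ⟨σ.symm a, by simp⟩
  have := h.map v
  rwa [List.map_map] at this

end OfFn

section Core

variable (f : ℝ → Y) {s : ℕ} (h : Fin s → ℝ)

/-- The subgroup of `ℝ` generated by the steps. -/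
def G0 : AddSubgroup ℝ := AddSubgroup.closure (Set.range h)

/-- All iterated differences of order `n` with steps in the subgroup vanish. -/
def VanG (n : ℕ) : Prop :=
  ∀ l : List ℝ, l.length = n → (∀ k ∈ l, k ∈ G0 h) → ddIter l f = 0

/-- Translates of iterated differences of `f` whose steps are generators. -/
def genSet (n : ℕ) : Set (ℝ → Y) :=
  {F | ∃ c : ℝ, ∃ l : List ℝ,
    l.length = n ∧ (∀ k ∈ l, k ∈ Set.range h) ∧ F = tr c (ddIter l f)}

def Mspan (n : ℕ) : Submodule ℚ (ℝ → Y) := Submodule.span ℚ (genSet f h n)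

theorem tr_mem_Mspan {n : ℕ} (c : ℝ) {F : ℝ → Y} (hF : F ∈ Mspan f h n) :
    tr c F ∈ Mspan f h n := by
  induction hF using Submodule.span_induction with
  | mem x hx =>
    obtain ⟨c', l, hlen, hmem, rfl⟩ := hx
    rw [tr_tr]
    exact Submodule.subset_span ⟨c' + c, l, hlen, hmem, rfl⟩
  | zero => rw [tr_zero_fun]; exact Submodule.zero_mem _
  | add x y hx hy ihx ihy => rw [tr_add_fun]; exact Submodule.add_mem _ ihx ihy
  | smul a x hx ih => rw [tr_smul_fun]; exact Submodule.smul_mem _ _ ih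

theorem dd_gen_mem {k : ℝ} (hk : k ∈ G0 h) :
    ∀ l : List ℝ, (∀ g ∈ l, g ∈ Set.range h) →
      dd k (ddIter l f) ∈ Mspan f h (l.length + 1) := by
  refine AddSubgroup.closure_induction
    (p := fun k _ => ∀ l : List ℝ, (∀ g ∈ l, g ∈ Set.range h) →
      dd k (ddIter l f) ∈ Mspan f h (l.length + 1)) ?_ ?_ ?_ ?_ hk
  · intro g hg l hl
    refine Submodule.subset_span ⟨0, g :: l, by simp, ?_, ?_⟩
    · intro k hk'
      rcases List.mem_cons.mp hk' with rfl | hk''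
      · exact hg
      · exact hl k hk''
    · rw [tr_zero]; rfl
  · intro l hl
    rw [dd_zero_step]
    exact Submodule.zero_mem _
  · intro x y hx hy px py l hl
    rw [dd_add_step]
    exact Submodule.add_mem _ (tr_mem_Mspan f h y (px l hl)) (py l hl)
  · intro x hx px l hl
    rw [dd_neg_step]
    exact Submodule.neg_mem _ (tr_mem_Mspan f h (-x) (px l hl))

theorem dd_mem_Mspan {k : ℝ} (hk : k ∈ G0 h) {n : ℕ} {F : ℝ → Y}
    (hF : F ∈ Mspan f h n) : dd k F ∈ Mspan f h (n + 1) := by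
  induction hF using Submodule.span_induction with
  | mem x hx =>
    obtain ⟨c, l, hlen, hmem, rfl⟩ := hx
    rw [dd_tr]
    have := dd_gen_mem f h hk l hmem
    rw [hlen] at this
    exact tr_mem_Mspan f h c this
  | zero => rw [dd_zero_fun]; exact Submodule.zero_mem _
  | add x y hx hy ihx ihy => rw [dd_add_fun]; exact Submodule.add_mem _ ihx ihy
  | smul a x hx ih => rw [dd_smul_fun]; exact Submodule.smul_mem _ _ ih

theorem ddIter_mem_Mspan :
    ∀ l : List ℝ, (∀ k ∈ l, k ∈ G0 h) → ddIter l f ∈ Mspan f h l.length := by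
  intro l
  induction l with
  | nil =>
    intro _
    exact Submodule.subset_span ⟨0, [], rfl, by simp, (tr_zero _).symm⟩
  | cons k t ih =>
    intro hmem
    rw [ddIter_cons, List.length_cons]
    exact dd_mem_Mspan f h (hmem k (List.mem_cons_self))
      (ih fun g hg => hmem g (List.mem_cons_of_mem _ hg))

theorem gen_zero (hs : 1 ≤ s)
    (Hn : ∀ n, s ≤ n → ∀ t : ℝ, (dd t)^[n] f = 0) :
    ∀ F ∈ genSet f h (s * s), F = (0 : ℝ → Y) := by
  rintro F ⟨c, l, hlen, hmem, rfl⟩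
  have hex : ∃ g, s ≤ l.count g := by
    by_contra hc
    push_neg at hc
    have hT : l.toFinset ⊆ Finset.image h Finset.univ := by
      intro a ha
      rcases hmem a (List.mem_toFinset.mp ha) with ⟨i, rfl⟩
      exact Finset.mem_image.mpr ⟨i, Finset.mem_univ i, rfl⟩
    have hcard : l.toFinset.card ≤ s :=
      le_trans (Finset.card_le_card hT) (le_trans Finset.card_image_le (by simp))
    have hsum : ∑ a ∈ l.toFinset, l.count a = l.length :=
      List.sum_toFinset_count_eq_length l
    have hb : ∑ a ∈ l.toFinset, l.count a ≤ l.toFinset.card * (s - 1) := by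
      calc ∑ a ∈ l.toFinset, l.count a ≤ ∑ _a ∈ l.toFinset, (s - 1) :=
            Finset.sum_le_sum fun a _ => Nat.le_sub_one_of_lt (hc a)
        _ = l.toFinset.card * (s - 1) := by rw [Finset.sum_const, smul_eq_mul]
    have h2 : l.toFinset.card * (s - 1) ≤ s * (s - 1) := Nat.mul_le_mul_right _ hcard
    have h3 : s * (s - 1) < s * s := by
      obtain ⟨m, rfl⟩ := Nat.exists_eq_add_of_le hs
      have e1 : 1 + m - 1 = m := by omega
      rw [e1]
      nlinarith
    omega
  obtain ⟨g, hg⟩ := hex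
  have hsplit : List.Perm (l.filter (fun x => x == g) ++ l.filter (fun x => !(x == g))) l :=
    List.filter_append_perm _ l
  have hiter : ddIter l f = ddIter (l.filter (fun x => !(x == g)))
      (ddIter (l.filter (fun x => x == g)) f) := by
    rw [← ddIter_append]
    refine (ddIter_perm ?_ f).symm
    exact List.perm_append_comm.trans hsplit
  have hrep : l.filter (fun x => x == g) =
      List.replicate (l.filter (fun x => x == g)).length g :=
    List.eq_replicate_of_mem fun x hx => by
      simpa using (List.mem_filter.mp hx).2
  have hlen2 : s ≤ (l.filter (fun x => x == g)).length := by
    have : l.count g = (l.filter (fun x => x == g)).length := by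
      simp [List.count, List.countP_eq_length_filter]
    omega
  have hz : ddIter (l.filter (fun x => x == g)) f = 0 := by
    rw [hrep, ddIter_replicate]
    exact Hn _ hlen2 g
  rw [hiter, hz, ddIter_zero_fun, tr_zero_fun]

theorem VanG_base (hs : 1 ≤ s)
    (Hn : ∀ n, s ≤ n → ∀ t : ℝ, (dd t)^[n] f = 0) :
    VanG f h (s * s) := by
  intro l hlen hmem
  have h1 : ddIter l f ∈ Mspan f h (s * s) := by
    have := ddIter_mem_Mspan f h l hmem
    rwa [hlen] at this
  have h2 : Mspan f h (s * s) ≤ ⊥ := by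
    rw [Mspan, Submodule.span_le]
    intro F hF
    rw [gen_zero f h hs Hn F hF]
    exact Submodule.zero_mem ⊥
  simpa using h2 h1

theorem VanG_step (Hn : ∀ n, s ≤ n → ∀ t : ℝ, (dd t)^[n] f = 0)
    (n : ℕ) (hn : s ≤ n) (V1 : VanG f h (n + 1)) : VanG f h n := by
  classical
  intro l hlen hmem
  subst hlen
  -- additivity in one slot, with the correction killed by `V1`
  have hset : ∀ (m : List ℝ), m.length = l.length → (∀ k ∈ m, k ∈ G0 h) →
      ∀ (i : ℕ), i < l.length → ∀ a b : ℝ, a ∈ G0 h → b ∈ G0 h →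
      ddIter (m.set i (a + b)) f = ddIter (m.set i a) f + ddIter (m.set i b) f := by
    intro m hm hmm i hi a b ha hb
    rw [ddIter_set_add f m i (by omega) a b]
    have hz : ddIter (b :: a :: m.eraseIdx i) f = 0 := by
      apply V1
      · have he : (m.eraseIdx i).length = m.length - 1 := by
          rw [List.length_eraseIdx, if_pos (by omega)]
        simp only [List.length_cons, he]
        omega
      · intro k hk
        rcases List.mem_cons.mp hk with rfl | hk
        · exact hb
        rcases List.mem_cons.mp hk with rfl | hk
        · exact ha
        · exact hmm k (List.eraseIdx_subset hk)
    rw [hz, add_zero]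
  have coe_update : ∀ (v : Fin l.length → ↥(G0 h)) (i : Fin l.length) (x : ↥(G0 h)),
      (fun j => ((Function.update v i x j : ℝ))) =
        Function.update (fun j => ((v j : ℝ))) i (x : ℝ) := by
    intro v i x
    funext j
    by_cases hj : j = i
    · subst hj; simp
    · simp [Function.update_of_ne hj]
  have mem_ofFn' : ∀ (v : Fin l.length → ↥(G0 h)) (k : ℝ),
      k ∈ List.ofFn (fun i => ((v i : ℝ))) → k ∈ G0 h := by
    intro v k hk
    obtain ⟨i, rfl⟩ := List.mem_ofFn.mp hk
    exact (v i).2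
  set BF : (Fin l.length → ↥(G0 h)) → (ℝ → Y) :=
    fun v => ddIter (List.ofFn fun i => ((v i : ℝ))) f with hBF
  have Badd : ∀ (v : Fin l.length → ↥(G0 h)) (i : Fin l.length) (a b : ↥(G0 h)),
      BF (Function.update v i (a + b)) =
        BF (Function.update v i a) + BF (Function.update v i b) := by
    intro v i a b
    simp only [hBF, coe_update, ofFn_update, AddSubgroup.coe_add]
    exact hset _ (by simp) (mem_ofFn' v) i i.isLt (a : ℝ) (b : ℝ) a.2 b.2
  have Bzero : ∀ (v : Fin l.length → ↥(G0 h)) (i : Fin l.length),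
      BF (Function.update v i 0) = 0 := by
    intro v i
    simp only [hBF, coe_update, ofFn_update, ZeroMemClass.coe_zero]
    exact ddIter_set_zero f _ i (by simpa using i.isLt)
  have Bneg : ∀ (v : Fin l.length → ↥(G0 h)) (i : Fin l.length) (a : ↥(G0 h)),
      BF (Function.update v i (-a)) = -BF (Function.update v i a) := by
    intro v i a
    have h1 := Badd v i a (-a)
    rw [add_neg_cancel, Bzero v i] at h1
    exact (neg_eq_of_add_eq_zero_right h1.symm).symm
  set B : MultilinearMap ℤ (fun _ : Fin l.length => ↥(G0 h)) (ℝ → Y) :=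
    { toFun := BF
      map_update_add' := by
        intros dec v i a b
        have hd : dec = instDecidableEqFin l.length := Subsingleton.elim _ _
        subst hd
        exact Badd v i a b
      map_update_smul' := by
        intros dec v i c a
        have hd : dec = instDecidableEqFin l.length := Subsingleton.elim _ _
        subst hd
        induction c using Int.induction_on with
        | zero => rw [zero_smul, zero_smul, Bzero]
        | succ k ih =>
          have e : ((k : ℤ) + 1) • a = (k : ℤ) • a + a := by rw [add_smul, one_smul]
          rw [e, Badd, ih, add_smul, one_smul]
        | pred k ih =>
          have e : (-(k : ℤ) - 1) • a = (-(k : ℤ)) • a + (-a) := by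
            rw [sub_smul, one_smul, sub_eq_add_neg]
          rw [e, Badd, ih, Bneg, sub_smul, one_smul, sub_eq_add_neg] } with hB
  have Bdiag : ∀ t : ↥(G0 h), B (fun _ => t) = 0 := by
    intro t
    show BF _ = 0
    simp only [hBF]
    rw [List.ofFn_const, ddIter_replicate]
    exact Hn _ hn _
  have Bperm : ∀ (σ : Equiv.Perm (Fin l.length)) (v : Fin l.length → ↥(G0 h)),
      B (v ∘ σ) = B v := by
    intro σ v
    show BF _ = BF _
    exact ddIter_perm (ofFn_comp_perm σ fun j => ((v j : ℝ))) f
  -- the vector of steps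
  have hveq : ∀ i : Fin l.length, l.get i ∈ G0 h := fun i => hmem _ (l.get_mem i)
  set v : Fin l.length → ↥(G0 h) := fun i => ⟨l.get i, hveq i⟩ with hv
  have hBv : B v = ddIter l f := by
    show BF v = _
    simp only [hBF]
    have e : (fun i => ((v i : ℝ))) = l.get := rfl
    rw [e, List.ofFn_get]
  -- the coefficient of a fixed function in the inclusion-exclusion sum
  have coeff : ∀ R : Finset (Fin l.length),
      (∑ ε ∈ (Finset.univ : Finset (Fin l.length)).powerset.filter (fun ε => R ⊆ ε),
        (-1 : ℤ) ^ (l.length - ε.card))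
      = if R = Finset.univ then 1 else 0 := by
    intro R
    have hbij : ∑ ε ∈ (Finset.univ : Finset (Fin l.length)).powerset.filter (fun ε => R ⊆ ε),
        (-1 : ℤ) ^ (l.length - ε.card) = ∑ δ ∈ Rᶜ.powerset, (-1 : ℤ) ^ δ.card := by
      refine Finset.sum_bij' (fun ε _ => εᶜ) (fun δ _ => δᶜ) ?_ ?_ ?_ ?_ ?_
      · intro ε hε
        rw [Finset.mem_powerset]
        rw [Finset.mem_filter] at hε
        exact Finset.compl_subset_compl.mpr hε.2
      · intro δ hδ
        rw [Finset.mem_powerset] at hδ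
        rw [Finset.mem_filter]
        refine ⟨Finset.mem_powerset.mpr (Finset.subset_univ _), ?_⟩
        have := Finset.compl_subset_compl.mpr hδ
        rwa [compl_compl] at this
      · intro ε _; simp
      · intro δ _; simp
      · intro ε _
        simp [Finset.card_compl]
    rw [hbij, Finset.sum_powerset_neg_one_pow_card]
    by_cases hR : R = Finset.univ
    · rw [if_pos hR, if_pos (by rw [hR]; simp)]
    · rw [if_neg hR, if_neg (by simpa [Finset.compl_eq_empty_iff] using hR)]
  -- surjective maps as a finset
  have himg : (Fintype.piFinset fun _ : Fin l.length =>
        (Finset.univ : Finset (Fin l.length))).filter (fun r => Function.Surjective r) =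
      Finset.image (fun σ : Equiv.Perm (Fin l.length) => ⇑σ) Finset.univ := by
    ext r
    simp only [Finset.mem_filter, Fintype.mem_piFinset, Finset.mem_univ, true_and,
      Finset.mem_image, forall_const]
    constructor
    · intro hr
      have hb : Function.Bijective r := ⟨Finite.injective_iff_surjective.mpr hr.2, hr.2⟩
      exact ⟨Equiv.ofBijective r hb, rfl⟩
    · rintro ⟨σ, rfl⟩
      exact ⟨fun _ => trivial, σ.surjective⟩
  have hcard : ((Fintype.piFinset fun _ : Fin l.length =>
        (Finset.univ : Finset (Fin l.length))).filter (fun r => Function.Surjective r)).card =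
      l.length.factorial := by
    rw [himg, Finset.card_image_of_injective _ DFunLike.coe_injective]
    simp [Fintype.card_perm]
  -- the polarization identity
  have key : ∑ ε ∈ (Finset.univ : Finset (Fin l.length)).powerset,
      (-1 : ℤ) ^ (l.length - ε.card) • B (fun _ => ∑ i ∈ ε, v i)
      = l.length.factorial • B v := by
    have e1 : ∀ ε : Finset (Fin l.length),
        B (fun _ => ∑ i ∈ ε, v i) =
          ∑ r ∈ Fintype.piFinset (fun _ : Fin l.length => ε), B (fun j => v (r j)) := by
      intro ε
      exact B.map_sum_finset (g := fun _ j => v j) (A := fun _ => ε)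
    calc
      ∑ ε ∈ (Finset.univ : Finset (Fin l.length)).powerset,
          (-1 : ℤ) ^ (l.length - ε.card) • B (fun _ => ∑ i ∈ ε, v i)
        = ∑ ε ∈ (Finset.univ : Finset (Fin l.length)).powerset,
            ∑ r ∈ Fintype.piFinset (fun _ : Fin l.length => ε),
              (-1 : ℤ) ^ (l.length - ε.card) • B (fun j => v (r j)) := by
          refine Finset.sum_congr rfl fun ε _ => ?_
          rw [e1, Finset.smul_sum]
      _ = ∑ ε ∈ (Finset.univ : Finset (Fin l.length)).powerset,
            ∑ r ∈ Fintype.piFinset (fun _ : Fin l.length => (Finset.univ : Finset (Fin l.length))),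
              (if r ∈ Fintype.piFinset (fun _ : Fin l.length => ε) then
                (-1 : ℤ) ^ (l.length - ε.card) • B (fun j => v (r j)) else 0) := by
          refine Finset.sum_congr rfl fun ε _ => ?_
          rw [Finset.sum_ite_mem, Finset.inter_eq_right.mpr]
          intro r hr
          rw [Fintype.mem_piFinset]
          intro i
          exact Finset.mem_univ _
      _ = ∑ r ∈ Fintype.piFinset (fun _ : Fin l.length => (Finset.univ : Finset (Fin l.length))),
            ∑ ε ∈ (Finset.univ : Finset (Fin l.length)).powerset,
              (if r ∈ Fintype.piFinset (fun _ : Fin l.length => ε) then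
                (-1 : ℤ) ^ (l.length - ε.card) • B (fun j => v (r j)) else 0) :=
          Finset.sum_comm
      _ = ∑ r ∈ Fintype.piFinset (fun _ : Fin l.length => (Finset.univ : Finset (Fin l.length))),
            (if Function.Surjective r then (1 : ℤ) else 0) • B (fun j => v (r j)) := by
          refine Finset.sum_congr rfl fun r _ => ?_
          have hc : ∀ ε : Finset (Fin l.length),
              (r ∈ Fintype.piFinset fun _ : Fin l.length => ε) ↔
                Finset.image r Finset.univ ⊆ ε := by
            intro ε
            rw [Fintype.mem_piFinset, Finset.image_subset_iff]
            simp
          calc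
            ∑ ε ∈ (Finset.univ : Finset (Fin l.length)).powerset,
                (if r ∈ Fintype.piFinset (fun _ : Fin l.length => ε) then
                  (-1 : ℤ) ^ (l.length - ε.card) • B (fun j => v (r j)) else 0)
              = ∑ ε ∈ (Finset.univ : Finset (Fin l.length)).powerset.filter
                    (fun ε => Finset.image r Finset.univ ⊆ ε),
                  (-1 : ℤ) ^ (l.length - ε.card) • B (fun j => v (r j)) := by
                rw [Finset.sum_filter]
                refine Finset.sum_congr rfl fun ε _ => ?_
                exact if_congr (hc ε) rfl rfl
            _ = (∑ ε ∈ (Finset.univ : Finset (Fin l.length)).powerset.filter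
                    (fun ε => Finset.image r Finset.univ ⊆ ε),
                  (-1 : ℤ) ^ (l.length - ε.card)) • B (fun j => v (r j)) := by
                rw [Finset.sum_smul]
            _ = (if Finset.image r Finset.univ = Finset.univ then (1 : ℤ) else 0) •
                  B (fun j => v (r j)) := by rw [coeff]
            _ = (if Function.Surjective r then (1 : ℤ) else 0) • B (fun j => v (r j)) := by
                congr 1
                refine if_congr ?_ rfl rfl
                constructor
                · intro he y
                  have : y ∈ Finset.image r Finset.univ := by rw [he]; exact Finset.mem_univ _
                  obtain ⟨x, _, hx⟩ := Finset.mem_image.mp this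
                  exact ⟨x, hx⟩
                · intro hsurj
                  apply Finset.eq_univ_iff_forall.mpr
                  intro y
                  obtain ⟨x, hx⟩ := hsurj y
                  exact Finset.mem_image.mpr ⟨x, Finset.mem_univ _, hx⟩
      _ = ∑ r ∈ (Fintype.piFinset fun _ : Fin l.length =>
              (Finset.univ : Finset (Fin l.length))).filter (fun r => Function.Surjective r),
            B (fun j => v (r j)) := by
          rw [Finset.sum_filter]
          refine Finset.sum_congr rfl fun r _ => ?_
          rw [ite_smul, one_smul, zero_smul]
      _ = ∑ _r ∈ (Fintype.piFinset fun _ : Fin l.length =>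
              (Finset.univ : Finset (Fin l.length))).filter (fun r => Function.Surjective r),
            B v := by
          refine Finset.sum_congr rfl fun r hr => ?_
          have hsurj : Function.Surjective r := (Finset.mem_filter.mp hr).2
          have hb : Function.Bijective r := ⟨Finite.injective_iff_surjective.mpr hsurj, hsurj⟩
          have := Bperm (Equiv.ofBijective r hb) v
          exact this
      _ = l.length.factorial • B v := by
          rw [Finset.sum_const, hcard]
  -- conclusion
  have hzero : ∑ ε ∈ (Finset.univ : Finset (Fin l.length)).powerset,
      (-1 : ℤ) ^ (l.length - ε.card) • B (fun _ => ∑ i ∈ ε, v i) = 0 :=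
    Finset.sum_eq_zero fun ε _ => by rw [Bdiag]; simp
  have hfact : l.length.factorial • B v = 0 := by rw [← key, hzero]
  have hq : (l.length.factorial : ℚ) • B v = 0 := by
    rw [Nat.cast_smul_eq_nsmul]; exact hfact
  have hfac0 : (l.length.factorial : ℚ) ≠ 0 := by
    exact_mod_cast Nat.factorial_ne_zero l.length
  have hBv0 : B v = 0 := by
    have h2 := congrArg (fun z => (l.length.factorial : ℚ)⁻¹ • z) hq
    simpa [smul_smul, inv_mul_cancel₀ hfac0] using h2
  rw [← hBv]
  exact hBv0

/-- Downward induction from the pigeonhole base. -/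
theorem VanG_all (hs : 1 ≤ s) (Hn : ∀ n, s ≤ n → ∀ t : ℝ, (dd t)^[n] f = 0) :
    VanG f h s := by
  have key : ∀ d m, s ≤ m → m + d = s * s → VanG f h m := by
    intro d
    induction d with
    | zero =>
      intro m hm hmd
      rw [Nat.add_zero] at hmd
      rw [hmd]
      exact VanG_base f h hs Hn
    | succ d ih =>
      intro m hm hmd
      refine VanG_step f h Hn m hm ?_
      exact ih (m + 1) (by omega) (by omega)
  have hss : s ≤ s * s := Nat.le_mul_of_pos_left s hs
  exact key (s * s - s) s (le_refl s) (by omega)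

end Core

end Stmt6Aux

theorem stmt6 {Y : Type*} [AddCommGroup Y] [Module ℚ Y] (f : ℝ → Y)
    (s : ℕ) (hs : 1 ≤ s) (δ : ℝ) (hδ : 0 < δ)
    (H : ∀ x : ℝ, ∀ h ∈ Set.Ioo (-δ) (0 : ℝ), (dd h)^[s] f x = 0) :
    ∀ (x : ℝ) (h : Fin s → ℝ), ddIter (List.ofFn h) f x = 0 := by
  intro x h
  have H' : ∀ h' ∈ Set.Ioo (-δ) (0 : ℝ), (dd h')^[s] f = 0 := by
    intro h' hh'
    funext y
    exact H y h' hh'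
  have Hall := Stmt6Aux.hall_of_small f s hs δ hδ H'
  have Hn := Stmt6Aux.hn_of_hall f s Hall
  have hvan := Stmt6Aux.VanG_all f h hs Hn
  have hz : ddIter (List.ofFn h) f = 0 := by
    apply hvan
    · simp
    · intro k hk
      obtain ⟨i, rfl⟩ := List.mem_ofFn.mp hk
      exact AddSubgroup.subset_closure (Set.mem_range_self i)
  exact congrFun hz x
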